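/- Let w be a weight structure on 𝒞 and 𝒟 ⊂ 𝒞 a triangulated subcategory such that w restricts to a weight structure on 𝒟 (i.e. Ob 𝒟 ∩ 𝒞_{w≤0} and Ob 𝒟 ∩ 𝒞_{w≥0} form a weight structure on 𝒟). Then the Karoubi-closures of 𝒞_{w≤0} and 𝒞_{w≥0}, viewed as classes of objects of the Verdier quotient 𝒞/𝒟, form a weight structure w′ on 𝒞/𝒟. -/

import Mathlib

open CategoryTheory CategoryTheory.Limits CategoryTheory.Pretriangulated ZeroObject

universe v u v₂ u₂

/-- A weight structure (homological convention) on a triangulated category: a pair of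
additive retract-closed classes `(le, ge)` (playing the roles of `C_{w≤0}` and `C_{w≥0}`)
satisfying shift-stability `C_{w≤0} ⊆ C_{w≤0}[1]`, `C_{w≥0}[1] ⊆ C_{w≥0}`, the
orthogonality `Hom(C_{w≤0}, C_{w≥0}[1]) = 0`, and the existence of weight decompositions
`B → M → A → B[1]` with `B ∈ C_{w≤0}` and `A ∈ C_{w≥0}[1]`. -/
structure WeightStructure (C : Type u) [Category.{v} C] [Preadditive C] [HasZeroObject C]
    [HasBinaryBiproducts C] [HasShift C ℤ] [∀ n : ℤ, (shiftFunctor C n).Additive]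
    [Pretriangulated C] where
  le : Set C
  ge : Set C
  le_zero : (0 : C) ∈ le
  ge_zero : (0 : C) ∈ ge
  le_retract : ∀ X Y : C, (∃ (i : X ⟶ Y) (r : Y ⟶ X), i ≫ r = 𝟙 X) → Y ∈ le → X ∈ le
  ge_retract : ∀ X Y : C, (∃ (i : X ⟶ Y) (r : Y ⟶ X), i ≫ r = 𝟙 X) → Y ∈ ge → X ∈ ge
  le_add : ∀ X Y : C, X ∈ le → Y ∈ le → (X ⊞ Y) ∈ le
  ge_add : ∀ X Y : C, X ∈ ge → Y ∈ ge → (X ⊞ Y) ∈ ge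
  le_shift : ∀ X : C, X ∈ le → X⟦(-1 : ℤ)⟧ ∈ le
  ge_shift : ∀ X : C, X ∈ ge → X⟦(1 : ℤ)⟧ ∈ ge
  orth : ∀ X ∈ le, ∀ Y ∈ ge, ∀ f : X ⟶ Y⟦(1 : ℤ)⟧, f = 0
  decomp : ∀ M : C, ∃ (B A : C) (f : B ⟶ M) (g : M ⟶ A) (h : A ⟶ B⟦(1 : ℤ)⟧),
    B ∈ le ∧ A⟦(-1 : ℤ)⟧ ∈ ge ∧ Triangle.mk f g h ∈ distTriang C

variable {C : Type u} [Category.{v} C] [Preadditive C] [HasZeroObject C]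
  [HasBinaryBiproducts C] [HasShift C ℤ] [∀ n : ℤ, (shiftFunctor C n).Additive]
  [Pretriangulated C]

/-- `Z` is a cone of the morphism `f`. -/
def IsConeOf {A B : C} (f : A ⟶ B) (Z : C) : Prop :=
  ∃ (g : B ⟶ Z) (h : Z ⟶ A⟦(1 : ℤ)⟧), Triangle.mk f g h ∈ distTriang C

/-- The class of morphisms of `C` whose cone lies in the Karoubi-closure of `D`;
inverting these yields the Verdier quotient `C/D`. -/
def verdierW (D : Set C) : MorphismProperty C :=
  fun _ _ f => ∃ Z : C, IsConeOf f Z ∧ ∃ Z' ∈ D, ∃ (i : Z ⟶ Z') (r : Z' ⟶ Z), i ≫ r = 𝟙 Z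

open CategoryTheory.Category CategoryTheory.Preadditive

namespace Stmt16Aux

open MorphismProperty

/-- The multiplicative closure of a class of morphisms. -/
inductive MulClos (W : MorphismProperty C) : ∀ {X Y : C}, (X ⟶ Y) → Prop
  | of {X Y : C} (f : X ⟶ Y) (hf : W f) : MulClos W f
  | id (X : C) : MulClos W (𝟙 X)
  | comp {X Y Z : C} (f : X ⟶ Y) (g : Y ⟶ Z) (hf : MulClos W f) (hg : MulClos W g) :
      MulClos W (f ≫ g)

/-- The multiplicative closure as a `MorphismProperty`. -/
def mulClos (W : MorphismProperty C) : MorphismProperty C := fun _ _ f => MulClos W f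

instance (W : MorphismProperty C) : (mulClos W).IsMultiplicative where
  id_mem X := MulClos.id X
  comp_mem f g hf hg := MulClos.comp f g hf hg

lemma mulClos_isInvertedBy {E₂ : Type u₂} [Category.{v₂} E₂] {W : MorphismProperty C}
    {L : C ⥤ E₂} (hL : W.IsInvertedBy L) : (mulClos W).IsInvertedBy L := by
  intro X Y f hf
  induction hf with
  | of f hf => exact hL f hf
  | id X => rw [L.map_id]; infer_instance
  | comp f g hf hg ihf ihg =>
      rw [L.map_comp]
      exact @IsIso.comp_isIso _ _ _ _ _ _ _ ihf ihg

/-- A localization functor is also a localization functor with respect to the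
multiplicative closure. -/
lemma isLocalization_mulClos {E₂ : Type u₂} [Category.{v₂} E₂] (L : C ⥤ E₂)
    (W : MorphismProperty C) [L.IsLocalization W] : L.IsLocalization (mulClos W) := by
  have invL : (mulClos W).IsInvertedBy L := mulClos_isInvertedBy (Localization.inverts L W)
  have invQ : (mulClos W).IsInvertedBy W.Q := mulClos_isInvertedBy W.Q_inverts
  have invQ' : W.IsInvertedBy (mulClos W).Q :=
    fun X Y f hf => (mulClos W).Q_inverts _ (MulClos.of f hf)
  let G₁ : (mulClos W).Localization ⥤ W.Localization := Localization.Construction.lift W.Q invQ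
  let G₂ : W.Localization ⥤ (mulClos W).Localization :=
    Localization.Construction.lift (mulClos W).Q invQ'
  have fac₁ : (mulClos W).Q ⋙ G₁ = W.Q := Localization.Construction.fac _ _
  have fac₂ : W.Q ⋙ G₂ = (mulClos W).Q := Localization.Construction.fac _ _
  have h12 : G₁ ⋙ G₂ = 𝟭 _ := Localization.Construction.uniq _ _
    (by rw [← Functor.assoc, fac₁, fac₂, Functor.comp_id])
  have h21 : G₂ ⋙ G₁ = 𝟭 _ := Localization.Construction.uniq _ _
    (by rw [← Functor.assoc, fac₂, fac₁, Functor.comp_id])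
  have hG₁ : G₁.IsEquivalence :=
    (CategoryTheory.Equivalence.mk G₁ G₂ (eqToIso h12.symm) (eqToIso h21)).isEquivalence_functor
  refine ⟨invL, ?_⟩
  have e3 : Localization.Construction.lift L invL =
      G₁ ⋙ Localization.Construction.lift L (Localization.inverts L W) := by
    refine Localization.Construction.uniq _ _ ?_
    rw [Localization.Construction.fac, ← Functor.assoc, fac₁, Localization.Construction.fac]
  rw [e3]
  have h4 : (Localization.Construction.lift L (Localization.inverts L W)).IsEquivalence :=
    (inferInstance : L.IsLocalization W).isEquivalence
  haveI := hG₁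
  haveI := h4
  infer_instance

/-- One-step left Ore condition for `verdierW D`. -/
lemma ore_single (D : Set C) {X' X Y : C} (s : X' ⟶ X) (hs : verdierW D s) (f : X' ⟶ Y) :
    ∃ (Y' : C) (b : X ⟶ Y') (s' : Y ⟶ Y'), verdierW D s' ∧ f ≫ s' = s ≫ b := by
  obtain ⟨Z, ⟨g, h, HT⟩, hK⟩ := hs
  obtain ⟨Y', s', g', mem'⟩ := distinguished_cocone_triangle₂ (h ≫ f⟦(1 : ℤ)⟧')
  obtain ⟨b, hb₁, _⟩ := complete_distinguished_triangle_morphism₂ (Triangle.mk s g h)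
    (Triangle.mk s' g' (h ≫ f⟦(1 : ℤ)⟧')) HT mem' f (𝟙 Z) (by exact (Category.id_comp _).symm)
  exact ⟨Y', b, s', ⟨Z, ⟨g', h ≫ f⟦(1 : ℤ)⟧', mem'⟩, hK⟩, hb₁.symm⟩

/-- One-step "ext" condition for `verdierW D`. -/
lemma ext_single (D : Set C) (hDshift : ∀ X ∈ D, ∀ n : ℤ, X⟦n⟧ ∈ D)
    {X' X Y : C} (f₁ f₂ : X ⟶ Y) (s : X' ⟶ X) (hs : verdierW D s)
    (hf : s ≫ f₁ = s ≫ f₂) :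
    ∃ (Y' : C) (t : Y ⟶ Y'), verdierW D t ∧ f₁ ≫ t = f₂ ≫ t := by
  obtain ⟨Z, ⟨g, h, HT⟩, Z', hZ', i, ρ, hiρ⟩ := hs
  have hf2 : s ≫ (f₁ - f₂) = 0 := by rw [Preadditive.comp_sub, hf, sub_self]
  obtain ⟨q, hq⟩ := Triangle.yoneda_exact₂ _ HT (f₁ - f₂) hf2
  obtain ⟨Y', r, t', mem'⟩ := distinguished_cocone_triangle q
  refine ⟨Y', r, ?_, ?_⟩
  · refine ⟨Z⟦(1 : ℤ)⟧, ⟨t', -(q⟦(1 : ℤ)⟧'), rot_of_distTriang _ mem'⟩,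
      Z'⟦(1 : ℤ)⟧, hDshift Z' hZ' 1, i⟦(1 : ℤ)⟧', ρ⟦(1 : ℤ)⟧', ?_⟩
    rw [← Functor.map_comp, hiρ, CategoryTheory.Functor.map_id]
  · have h0 : q ≫ r = 0 := comp_distTriang_mor_zero₁₂ _ mem'
    rw [← sub_eq_zero, ← Preadditive.sub_comp, hq]; exact (Category.assoc _ _ _).trans (by rw [h0]; exact comp_zero)

lemma ore_mul (D : Set C) {V U : C} {s : V ⟶ U} (hs : MulClos (verdierW D) s) :
    ∀ {Y : C} (f : V ⟶ Y), ∃ (Y' : C) (b : U ⟶ Y') (s' : Y ⟶ Y'),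
      MulClos (verdierW D) s' ∧ f ≫ s' = s ≫ b := by
  induction hs with
  | of g hg =>
      intro Y f
      obtain ⟨Y', b, s', hs', hc⟩ := ore_single D g hg f
      exact ⟨Y', b, s', MulClos.of s' hs', hc⟩
  | id X =>
      intro Y f
      exact ⟨Y, f, 𝟙 Y, MulClos.id Y, by rw [comp_id, id_comp]⟩
  | comp g₁ g₂ h₁ h₂ ih₁ ih₂ =>
      intro Y f
      obtain ⟨Y₁, b₁, t₁, ht₁, hc₁⟩ := ih₁ f
      obtain ⟨Y₂, b₂, t₂, ht₂, hc₂⟩ := ih₂ b₁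
      refine ⟨Y₂, b₂, t₁ ≫ t₂, MulClos.comp _ _ ht₁ ht₂, ?_⟩
      calc f ≫ t₁ ≫ t₂ = (f ≫ t₁) ≫ t₂ := by rw [Category.assoc]
        _ = (g₁ ≫ b₁) ≫ t₂ := by rw [hc₁]
        _ = g₁ ≫ (b₁ ≫ t₂) := by rw [Category.assoc]
        _ = g₁ ≫ (g₂ ≫ b₂) := by rw [hc₂]
        _ = (g₁ ≫ g₂) ≫ b₂ := by rw [Category.assoc]

lemma ext_mul (D : Set C) (hDshift : ∀ X ∈ D, ∀ n : ℤ, X⟦n⟧ ∈ D)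
    {V U : C} {s : V ⟶ U} (hs : MulClos (verdierW D) s) :
    ∀ {Y : C} (f₁ f₂ : U ⟶ Y), s ≫ f₁ = s ≫ f₂ →
      ∃ (Y' : C) (t : Y ⟶ Y'), MulClos (verdierW D) t ∧ f₁ ≫ t = f₂ ≫ t := by
  induction hs with
  | of g hg =>
      intro Y f₁ f₂ heq
      obtain ⟨Y', t, ht, hc⟩ := ext_single D hDshift f₁ f₂ g hg heq
      exact ⟨Y', t, MulClos.of t ht, hc⟩
  | id X =>
      intro Y f₁ f₂ heq
      refine ⟨Y, 𝟙 Y, MulClos.id Y, ?_⟩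
      rw [comp_id, comp_id]
      rw [id_comp, id_comp] at heq
      exact heq
  | comp g₁ g₂ h₁ h₂ ih₁ ih₂ =>
      intro Y f₁ f₂ heq
      have heq' : g₁ ≫ (g₂ ≫ f₁) = g₁ ≫ (g₂ ≫ f₂) := by
        simpa only [Category.assoc] using heq
      obtain ⟨Y₁, t₁, ht₁, hc₁⟩ := ih₁ (g₂ ≫ f₁) (g₂ ≫ f₂) heq'
      have hc₁' : g₂ ≫ (f₁ ≫ t₁) = g₂ ≫ (f₂ ≫ t₁) := by
        simpa only [Category.assoc] using hc₁
      obtain ⟨Y₂, t₂, ht₂, hc₂⟩ := ih₂ (f₁ ≫ t₁) (f₂ ≫ t₁) hc₁'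
      refine ⟨Y₂, t₁ ≫ t₂, MulClos.comp _ _ ht₁ ht₂, ?_⟩
      simpa only [Category.assoc] using hc₂

lemma hasLeftCalc (D : Set C) (hDshift : ∀ X ∈ D, ∀ n : ℤ, X⟦n⟧ ∈ D) :
    (mulClos (verdierW D)).HasLeftCalculusOfFractions where
  exists_leftFraction X Y φ := by
    obtain ⟨Y', b, s', hs', hc⟩ := ore_mul D φ.hs φ.f
    exact ⟨MorphismProperty.LeftFraction.mk b s' hs', hc⟩
  ext X' X Y f₁ f₂ s hs heq := by
    obtain ⟨Y', t, ht, hc⟩ := ext_mul D hDshift hs f₁ f₂ heq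
    exact ⟨Y', t, ht, hc⟩

end Stmt16Aux

/-- If a weight structure `w` on `C` restricts to a weight structure on a triangulated
subcategory `D` (i.e. every object of `D` admits a weight decomposition within `D`), then
the Karoubi-closures of the images of `C_{w≤0}` and `C_{w≥0}` in the Verdier quotient
`C/D` form a weight structure there. -/
theorem stmt16 {E : Type u₂} [Category.{v₂} E] [Preadditive E] [HasZeroObject E]
    [HasBinaryBiproducts E] [HasShift E ℤ] [∀ n : ℤ, (shiftFunctor E n).Additive]
    [Pretriangulated E]
    (w : WeightStructure C) (D : Set C)
    (hD0 : (0 : C) ∈ D)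
    (hDshift : ∀ X ∈ D, ∀ n : ℤ, X⟦n⟧ ∈ D)
    (hDext : ∀ T : Triangle C, (T ∈ distTriang C) → T.obj₁ ∈ D → T.obj₃ ∈ D → T.obj₂ ∈ D)
    (hres : ∀ M ∈ D, ∃ (B A : C) (f : B ⟶ M) (g : M ⟶ A) (h : A ⟶ B⟦(1 : ℤ)⟧),
      B ∈ D ∧ A ∈ D ∧ B ∈ w.le ∧ A⟦(-1 : ℤ)⟧ ∈ w.ge ∧ Triangle.mk f g h ∈ distTriang C)
    (Q : C ⥤ E) [Q.CommShift ℤ] [Q.IsTriangulated] [Q.EssSurj]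
    [Q.IsLocalization (verdierW D)] :
    ∃ w' : WeightStructure E,
      w'.le = {X : E | ∃ Y ∈ w.le, ∃ (i : X ⟶ Q.obj Y) (r : Q.obj Y ⟶ X), i ≫ r = 𝟙 X} ∧
      w'.ge = {X : E | ∃ Y ∈ w.ge, ∃ (i : X ⟶ Q.obj Y) (r : Q.obj Y ⟶ X), i ≫ r = 𝟙 X} := by
  classical
  -- set-up : calculus of fractions for the multiplicative closure of `verdierW D`
  haveI : (Stmt16Aux.mulClos (verdierW D)).HasLeftCalculusOfFractions :=
    Stmt16Aux.hasLeftCalc D hDshift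
  haveI : Q.IsLocalization (Stmt16Aux.mulClos (verdierW D)) :=
    Stmt16Aux.isLocalization_mulClos Q (verdierW D)
  -- orthogonality in `C`, with the shift juggled away
  have horth' : ∀ (X : C), X ∈ w.le → ∀ (V : C), V⟦(-1 : ℤ)⟧ ∈ w.ge →
      ∀ f : X ⟶ V, f = 0 := by
    intro X hX V hV f
    have h0 : f ≫ (shiftNegShift V (1 : ℤ)).inv = 0 :=
      w.orth X hX (V⟦(-1 : ℤ)⟧) hV _
    calc f = (f ≫ (shiftNegShift V (1 : ℤ)).inv) ≫ (shiftNegShift V (1 : ℤ)).hom := by rw [Category.assoc, Iso.inv_hom_id, comp_id]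
      _ = 0 := by rw [h0, zero_comp]
  -- `w.le` is closed under extensions
  have hle_ext : ∀ (T : Triangle C), (T ∈ distTriang C) → T.obj₁ ∈ w.le →
      T.obj₃ ∈ w.le → T.obj₂ ∈ w.le := by
    intro T hT h₁ h₃
    obtain ⟨Bt, At, fd, gd, hd, hB, hA, Hd⟩ := w.decomp T.obj₂
    have h01 : T.mor₁ ≫ gd = 0 := horth' T.obj₁ h₁ At hA _
    obtain ⟨y, hy⟩ := Triangle.yoneda_exact₂ T hT gd h01
    have hy0 : y = 0 := horth' T.obj₃ h₃ At hA y
    have hgd : gd = 0 := by rw [hy, hy0, comp_zero]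
    obtain ⟨rr, hrr⟩ := Triangle.coyoneda_exact₂ _ Hd (𝟙 T.obj₂)
      (show 𝟙 T.obj₂ ≫ gd = 0 by rw [id_comp, hgd])
    exact w.le_retract T.obj₂ Bt ⟨rr, fd, hrr.symm⟩ hB
  -- the key step : propagating the vanishing of maps from `w.le` along `verdierW D`
  have hstep : ∀ {V U : C} (s : V ⟶ U), verdierW D s →
      (∀ A, A ∈ w.le → ∀ f : A ⟶ V, Q.map f = 0) →
      (∀ A, A ∈ w.le → ∀ f : A ⟶ U, Q.map f = 0) := by
    intro V U s hs hV A hA f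
    obtain ⟨Z, ⟨g, h, HT⟩, Z', hZ'D, i, ρ, hiρ⟩ := hs
    obtain ⟨P, A₁, α, β, γ, hPD, hA₁D, hPle, hA₁ge, Hd⟩ := hres Z' hZ'D
    have h1 : (f ≫ g ≫ i) ≫ β = 0 := horth' A hA A₁ hA₁ge _
    obtain ⟨u₀, hu₀⟩ := Triangle.coyoneda_exact₂ _ Hd (f ≫ g ≫ i) h1
    obtain ⟨A', ι, δ, HT'⟩ := distinguished_cocone_triangle₁ u₀
    have hA'le : A' ∈ w.le := by
      refine hle_ext _ (inv_rot_of_distTriang _ HT') ?_ ?_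
      · exact w.le_shift P hPle
      · exact hA
    have hι : ι ≫ u₀ = 0 := comp_distTriang_mor_zero₁₂ _ HT'
    have e1 : ι ≫ (f ≫ g ≫ i) = 0 := by
      exact ((congrArg (fun k : A ⟶ Z' => ι ≫ k) hu₀).trans (Category.assoc _ _ _).symm).trans (by rw [hι]; exact zero_comp)
    have e2 := reassoc_of% e1
    have h2 : (ι ≫ f) ≫ g = 0 := by
      have hg' : g = g ≫ i ≫ ρ := by rw [hiρ, comp_id]
      rw [hg']
      simp only [Category.assoc]
      rw [e2, zero_comp]
    obtain ⟨x, hx⟩ := Triangle.coyoneda_exact₂ _ HT (ι ≫ f) h2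
    have hQx : Q.map x = 0 := hV A' hA'le x
    have h5 : Q.map ι ≫ Q.map f = 0 := by
      rw [← Q.map_comp]; exact (congrArg Q.map hx).trans ((Q.map_comp _ _).trans (by rw [hQx]; exact zero_comp))
    haveI : IsIso (Q.map ι) := Localization.inverts Q (verdierW D) ι
      ⟨P, ⟨u₀, δ, HT'⟩, P, hPD, 𝟙 P, 𝟙 P, by rw [id_comp]⟩
    rw [← cancel_epi (Q.map ι), comp_zero]
    exact h5
  -- the chain version for the multiplicative closure
  have hchain : ∀ {V U : C} {s : V ⟶ U}, Stmt16Aux.MulClos (verdierW D) s →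
      (∀ A, A ∈ w.le → ∀ f : A ⟶ V, Q.map f = 0) →
      (∀ A, A ∈ w.le → ∀ f : A ⟶ U, Q.map f = 0) := by
    intro V U s hs
    induction hs with
    | of f hf => exact hstep f hf
    | id X => exact fun hh => hh
    | comp f g hf hg ihf ihg => exact fun hh => ihg (ihf hh)
  -- the main orthogonality statement in `E`
  have hmain : ∀ (A : C), A ∈ w.le → ∀ (B : C), B ∈ w.ge →
      ∀ ψ : Q.obj A ⟶ Q.obj (B⟦(1 : ℤ)⟧), ψ = 0 := by
    intro A hA B hB ψ
    obtain ⟨φ, hφ⟩ := Localization.exists_leftFraction Q (Stmt16Aux.mulClos (verdierW D)) ψ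
    have base : ∀ A', A' ∈ w.le → ∀ f : A' ⟶ B⟦(1 : ℤ)⟧, Q.map f = 0 := by
      intro A' hA' f
      rw [w.orth A' hA' B hB f]
      exact Q.map_zero _ _
    have hQf : Q.map φ.f = 0 := hchain φ.hs base A hA φ.f
    have h6 : ψ ≫ Q.map φ.s = 0 := by
      rw [hφ, MorphismProperty.LeftFraction.map_comp_map_s, hQf]
    haveI : IsIso (Q.map φ.s) :=
      Localization.inverts Q (Stmt16Aux.mulClos (verdierW D)) _ φ.hs
    rw [← cancel_mono (Q.map φ.s), zero_comp]
    exact h6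
  -- now build the weight structure on `E`
  refine ⟨{
    le := {X : E | ∃ Y ∈ w.le, ∃ (i : X ⟶ Q.obj Y) (r : Q.obj Y ⟶ X), i ≫ r = 𝟙 X}
    ge := {X : E | ∃ Y ∈ w.ge, ∃ (i : X ⟶ Q.obj Y) (r : Q.obj Y ⟶ X), i ≫ r = 𝟙 X}
    le_zero := ⟨0, w.le_zero, 0, 0, by rw [zero_comp]; exact (Limits.id_zero).symm⟩
    ge_zero := ⟨0, w.ge_zero, 0, 0, by rw [zero_comp]; exact (Limits.id_zero).symm⟩
    le_retract := by
      rintro X Y ⟨i, r, hir⟩ ⟨Y₀, hY₀, i', r', h'⟩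
      refine ⟨Y₀, hY₀, i ≫ i', r' ≫ r, ?_⟩
      rw [Category.assoc, ← Category.assoc i' r' r, h', id_comp, hir]
    ge_retract := by
      rintro X Y ⟨i, r, hir⟩ ⟨Y₀, hY₀, i', r', h'⟩
      refine ⟨Y₀, hY₀, i ≫ i', r' ≫ r, ?_⟩
      rw [Category.assoc, ← Category.assoc i' r' r, h', id_comp, hir]
    le_add := by
      rintro X Y ⟨A₀, hA₀, iX, rX, hX⟩ ⟨B₀, hB₀, iY, rY, hY⟩
      refine ⟨A₀ ⊞ B₀, w.le_add A₀ B₀ hA₀ hB₀,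
        biprod.map iX iY ≫ biprod.desc (Q.map biprod.inl) (Q.map biprod.inr),
        biprod.lift (Q.map biprod.fst) (Q.map biprod.snd) ≫ biprod.map rX rY, ?_⟩
      have e11 : Q.map (biprod.inl : A₀ ⟶ A₀ ⊞ B₀) ≫ Q.map (biprod.fst : A₀ ⊞ B₀ ⟶ A₀) = 𝟙 _ := by
        rw [← Q.map_comp, biprod.inl_fst, Q.map_id]
      have e12 : Q.map (biprod.inl : A₀ ⟶ A₀ ⊞ B₀) ≫ Q.map (biprod.snd : A₀ ⊞ B₀ ⟶ B₀) = 0 := by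
        rw [← Q.map_comp, biprod.inl_snd, Q.map_zero]
      have e21 : Q.map (biprod.inr : B₀ ⟶ A₀ ⊞ B₀) ≫ Q.map (biprod.fst : A₀ ⊞ B₀ ⟶ A₀) = 0 := by
        rw [← Q.map_comp, biprod.inr_fst, Q.map_zero]
      have e22 : Q.map (biprod.inr : B₀ ⟶ A₀ ⊞ B₀) ≫ Q.map (biprod.snd : A₀ ⊞ B₀ ⟶ B₀) = 𝟙 _ := by
        rw [← Q.map_comp, biprod.inr_snd, Q.map_id]
      apply biprod.hom_ext' <;> apply biprod.hom_ext <;>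
        simp [reassoc_of% e11, reassoc_of% e12, reassoc_of% e21, reassoc_of% e22, hX, hY]
    ge_add := by
      rintro X Y ⟨A₀, hA₀, iX, rX, hX⟩ ⟨B₀, hB₀, iY, rY, hY⟩
      refine ⟨A₀ ⊞ B₀, w.ge_add A₀ B₀ hA₀ hB₀,
        biprod.map iX iY ≫ biprod.desc (Q.map biprod.inl) (Q.map biprod.inr),
        biprod.lift (Q.map biprod.fst) (Q.map biprod.snd) ≫ biprod.map rX rY, ?_⟩
      have e11 : Q.map (biprod.inl : A₀ ⟶ A₀ ⊞ B₀) ≫ Q.map (biprod.fst : A₀ ⊞ B₀ ⟶ A₀) = 𝟙 _ := by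
        rw [← Q.map_comp, biprod.inl_fst, Q.map_id]
      have e12 : Q.map (biprod.inl : A₀ ⟶ A₀ ⊞ B₀) ≫ Q.map (biprod.snd : A₀ ⊞ B₀ ⟶ B₀) = 0 := by
        rw [← Q.map_comp, biprod.inl_snd, Q.map_zero]
      have e21 : Q.map (biprod.inr : B₀ ⟶ A₀ ⊞ B₀) ≫ Q.map (biprod.fst : A₀ ⊞ B₀ ⟶ A₀) = 0 := by
        rw [← Q.map_comp, biprod.inr_fst, Q.map_zero]
      have e22 : Q.map (biprod.inr : B₀ ⟶ A₀ ⊞ B₀) ≫ Q.map (biprod.snd : A₀ ⊞ B₀ ⟶ B₀) = 𝟙 _ := by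
        rw [← Q.map_comp, biprod.inr_snd, Q.map_id]
      apply biprod.hom_ext' <;> apply biprod.hom_ext <;>
        simp [reassoc_of% e11, reassoc_of% e12, reassoc_of% e21, reassoc_of% e22, hX, hY]
    le_shift := by
      rintro X ⟨A₀, hA₀, i, r, hir⟩
      refine ⟨A₀⟦(-1 : ℤ)⟧, w.le_shift A₀ hA₀,
        (shiftFunctor E (-1 : ℤ)).map i ≫ ((Q.commShiftIso (-1 : ℤ)).app A₀).inv,
        ((Q.commShiftIso (-1 : ℤ)).app A₀).hom ≫ (shiftFunctor E (-1 : ℤ)).map r, ?_⟩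
      rw [Category.assoc, Iso.inv_hom_id_assoc, ← Functor.map_comp, hir, CategoryTheory.Functor.map_id]
    ge_shift := by
      rintro X ⟨A₀, hA₀, i, r, hir⟩
      refine ⟨A₀⟦(1 : ℤ)⟧, w.ge_shift A₀ hA₀,
        (shiftFunctor E (1 : ℤ)).map i ≫ ((Q.commShiftIso (1 : ℤ)).app A₀).inv,
        ((Q.commShiftIso (1 : ℤ)).app A₀).hom ≫ (shiftFunctor E (1 : ℤ)).map r, ?_⟩
      rw [Category.assoc, Iso.inv_hom_id_assoc, ← Functor.map_comp, hir, CategoryTheory.Functor.map_id]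
    orth := by
      rintro X ⟨A, hA, iX, rX, hiX⟩ Y ⟨B, hB, iY, rY, hiY⟩ f
      have hψ : (rX ≫ f ≫ (shiftFunctor E (1 : ℤ)).map iY) ≫
          ((Q.commShiftIso (1 : ℤ)).app B).inv = 0 := hmain A hA B hB _
      have h2 : rX ≫ f ≫ (shiftFunctor E (1 : ℤ)).map iY = 0 := by
        rw [← cancel_mono ((Q.commShiftIso (1 : ℤ)).app B).inv, zero_comp]
        exact hψ
      calc f = (iX ≫ rX) ≫ f ≫
            ((shiftFunctor E (1 : ℤ)).map iY ≫ (shiftFunctor E (1 : ℤ)).map rY) := by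
            rw [hiX, ← Functor.map_comp, hiY, CategoryTheory.Functor.map_id, id_comp, comp_id]
        _ = iX ≫ (rX ≫ f ≫ (shiftFunctor E (1 : ℤ)).map iY) ≫
            (shiftFunctor E (1 : ℤ)).map rY := by simp only [Category.assoc]
        _ = 0 := by rw [h2, zero_comp, comp_zero]
    decomp := by
      intro M
      have e : Q.obj (Q.objPreimage M) ≅ M := Q.objObjPreimageIso M
      obtain ⟨B₀, A₀, f₀, g₀, h₀, hB₀, hA₀, H₀⟩ := w.decomp (Q.objPreimage M)
      refine ⟨Q.obj B₀, Q.obj A₀, Q.map f₀ ≫ e.hom, e.inv ≫ Q.map g₀,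
        Q.map h₀ ≫ (Q.commShiftIso (1 : ℤ)).hom.app B₀,
        ⟨B₀, hB₀, 𝟙 _, 𝟙 _, by rw [id_comp]⟩,
        ⟨A₀⟦(-1 : ℤ)⟧, hA₀, ((Q.commShiftIso (-1 : ℤ)).app A₀).inv,
          ((Q.commShiftIso (-1 : ℤ)).app A₀).hom, Iso.inv_hom_id _⟩, ?_⟩
      refine isomorphic_distinguished _ (Q.map_distinguished _ H₀) _ ?_
      exact Triangle.isoMk _ _ (Iso.refl _) e.symm (Iso.refl _)
        (((Category.assoc _ _ _).trans ((congrArg (fun k : Q.obj (Q.objPreimage M) ⟶ Q.obj (Q.objPreimage M) => Q.map f₀ ≫ k) e.hom_inv_id).trans (Category.comp_id (Q.map f₀)))).trans (Category.id_comp _).symm)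
        (Category.comp_id _)
        (((congrArg (fun k => (Q.map h₀ ≫ (Q.commShiftIso (1 : ℤ)).hom.app B₀) ≫ k) ((shiftFunctor E (1 : ℤ)).map_id _)).trans (Category.comp_id _)).trans (Category.id_comp _).symm) }, rfl, rfl⟩
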